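/- arXiv:2012.15369 — 4 statements merged into one kernel-verified Lean document; each statement's English description precedes it below -/
import Mathlib

section
/- Let G be a group, U ⊴ G a normal subgroup of finite index, H ≤ G a subgroup, and a ∈ H. Then ⟨a⟩·(H ∩ U) is a subgroup of H, and the indices satisfy [G : U] = [G : UH] · [H : ⟨a⟩(H ∩ U)] · [⟨a⟩ : ⟨a⟩ ∩ U], where UH = {uh : u ∈ U, h ∈ H} is the subgroup generated by U and H. -/
open Pointwise

/-- For `U ⊴ G` of finite index, `H ≤ G` and `a ∈ H`, the set
`⟨a⟩·(H ∩ U)` is a subgroup of `H` and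
`[G : U] = [G : UH] · [H : ⟨a⟩(H ∩ U)] · [⟨a⟩ : ⟨a⟩ ∩ U]`. -/
theorem statement3 {G : Type*} [Group G] (U H : Subgroup G) [U.Normal] [U.FiniteIndex]
    (a : G) (ha : a ∈ H) :
    ∃ S : Subgroup G,
      (S : Set G) = (Subgroup.zpowers a : Set G) * ((H ⊓ U : Subgroup G) : Set G) ∧
      S ≤ H ∧
      U.index = (U ⊔ H).index * S.relIndex H * U.relIndex (Subgroup.zpowers a) := by
  set a' : H := ⟨a, ha⟩ with ha'
  set U' : Subgroup H := U.subgroupOf H with hU'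
  haveI : U'.Normal := Subgroup.Normal.subgroupOf ‹U.Normal› H
  set S' : Subgroup H := Subgroup.zpowers a' ⊔ U' with hS'
  refine ⟨S'.map H.subtype, ?_, ?_, ?_⟩
  · have h1 : (S' : Set H) = (Subgroup.zpowers a' : Set H) * (U' : Set H) :=
      Subgroup.mul_normal _ _
    have h2 : ((S'.map H.subtype : Subgroup G) : Set G) = H.subtype '' (S' : Set H) := rfl
    rw [h2, h1, Set.image_mul (H.subtype : H →* G)]
    congr 1
    · have := (MonoidHom.map_zpowers H.subtype a')
      have h3 : H.subtype '' (Subgroup.zpowers a' : Set H)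
          = (((Subgroup.zpowers a').map H.subtype : Subgroup G) : Set G) := rfl
      rw [h3, this]
      rfl
    · have h4 : H.subtype '' (U' : Set H) = ((U'.map H.subtype : Subgroup G) : Set G) := rfl
      rw [h4, Subgroup.subgroupOf_map_subtype, inf_comm]
  · exact Subgroup.map_subtype_le S'
  · have hzle : Subgroup.zpowers a ≤ H := Subgroup.zpowers_le.mpr ha
    have hmap : (Subgroup.zpowers a').map H.subtype = Subgroup.zpowers a := by
      rw [MonoidHom.map_zpowers]; rfl
    have hz : (Subgroup.zpowers a).subgroupOf H = Subgroup.zpowers a' := by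
      rw [← hmap, Subgroup.subgroupOf,
        Subgroup.comap_map_eq_self_of_injective H.subtype_injective]
    have hSof : (S'.map H.subtype).subgroupOf H = S' :=
      Subgroup.comap_map_eq_self_of_injective H.subtype_injective S'
    have e1 : U.relIndex (U ⊔ H) * (U ⊔ H).index = U.index :=
      Subgroup.relIndex_mul_index le_sup_left
    have e2 : U.relIndex (U ⊔ H) = U.relIndex H := Subgroup.relIndex_sup_left H U
    have e3 : U'.relIndex S' * S'.index = U'.index :=
      Subgroup.relIndex_mul_index le_sup_right
    have e4 : U'.relIndex S' = U'.relIndex (Subgroup.zpowers a') :=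
      Subgroup.relIndex_sup_right (Subgroup.zpowers a') U'
    have e5 : U'.relIndex (Subgroup.zpowers a') = U.relIndex (Subgroup.zpowers a) := by
      rw [← hz, hU']
      exact Subgroup.relIndex_subgroupOf hzle
    have e6 : (S'.map H.subtype).relIndex H = S'.index := by
      rw [Subgroup.relIndex, hSof]
    have e7 : U.relIndex H = U'.index := rfl
    rw [← e1, e2, e7, ← e3, e4, e5, e6]
    ring
end

section
/- Let G = ⟨a, b ∣ aba = bab⟩ be the trefoil knot group, let φ₂ : G → ℤ/2ℤ be the homomorphism sending both generators a and b to 1, let U₂ = ker φ₂, and let M₂ be the normal closure in G of {a²}. Then M₂ ≤ U₂ and the quotient group U₂/M₂ is isomorphic to the cyclic group ℤ/3ℤ. -/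
/-- The single relator `aba(bab)⁻¹` of the trefoil knot group, with `a = of true`,
`b = of false`. -/
def trefoilRels : Set (FreeGroup Bool) :=
  {FreeGroup.of true * FreeGroup.of false * FreeGroup.of true *
    (FreeGroup.of false * FreeGroup.of true * FreeGroup.of false)⁻¹}

/-- The trefoil knot group `⟨a, b ∣ aba = bab⟩`. -/
abbrev TrefoilGroup := PresentedGroup trefoilRels

namespace Statement7Aux

noncomputable section

/-- image of generators in `S₃`. -/
def permOf (x : Bool) : Equiv.Perm (Fin 3) := if x then Equiv.swap 0 1 else Equiv.swap 1 2

lemma permRel : ∀ r ∈ trefoilRels, FreeGroup.lift permOf r = 1 := by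
  intro r hr
  rw [trefoilRels, Set.mem_singleton_iff] at hr
  subst hr
  simp only [map_mul, map_inv, FreeGroup.lift_apply_of, permOf]
  decide

/-- The homomorphism from the trefoil group to `S₃`. -/
def f3 : TrefoilGroup →* Equiv.Perm (Fin 3) := PresentedGroup.toGroup permRel

lemma f3_of (x : Bool) : f3 (PresentedGroup.of x) = permOf x := PresentedGroup.toGroup.of permRel

/-- The relation `aba = bab` holds in the trefoil group. -/
lemma hrel : (PresentedGroup.of true : TrefoilGroup) * PresentedGroup.of false *
      PresentedGroup.of true
    = PresentedGroup.of false * PresentedGroup.of true * PresentedGroup.of false := by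
  have h : (QuotientGroup.mk' (Subgroup.normalClosure trefoilRels))
      (FreeGroup.of true * FreeGroup.of false * FreeGroup.of true *
      (FreeGroup.of false * FreeGroup.of true * FreeGroup.of false)⁻¹) = 1 := by
    apply (QuotientGroup.eq_one_iff _).2
    exact Subgroup.subset_normalClosure rfl
  rw [map_mul, map_inv, mul_inv_eq_one, map_mul, map_mul, map_mul, map_mul] at h
  exact h

/-- The normal closure of `a²`. -/
abbrev M : Subgroup TrefoilGroup :=
  Subgroup.normalClosure {(PresentedGroup.of true : TrefoilGroup) ^ 2}

/-- The quotient `G/M₂`. -/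
abbrev K := TrefoilGroup ⧸ M

/-- quotient map -/
def π : TrefoilGroup →* K := QuotientGroup.mk' M

def A : K := π (PresentedGroup.of true)
def B : K := π (PresentedGroup.of false)

lemma hA : A * A = 1 := by
  have h2 : π ((PresentedGroup.of true : TrefoilGroup) ^ 2) = 1 :=
    (QuotientGroup.eq_one_iff _).2 (Subgroup.subset_normalClosure rfl)
  rw [map_pow, sq] at h2
  exact h2

lemma hR : A * B * A = B * A * B := by
  simp only [A, B, ← map_mul]
  exact congrArg π hrel

lemma hB : B * B = 1 := by
  have hconj : A * B * A * (A * B)⁻¹ = B := by rw [hR]; group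
  have h1 : (A * B * A * (A * B)⁻¹) * (A * B * A * (A * B)⁻¹) = A * B * (A * A) * (A * B)⁻¹ := by
    group
  rw [← hconj, h1, hA, mul_one]
  group

/-- The six candidate elements of `K`. -/
def S : Set K := {1, A, B, A * B, B * A, A * B * A}

lemma one_mem_S : (1 : K) ∈ S := Or.inl rfl

lemma mulA : ∀ y ∈ S, A * y ∈ S := by
  intro y hy
  simp only [S, Set.mem_insert_iff, Set.mem_singleton_iff] at hy ⊢
  rcases hy with rfl | rfl | rfl | rfl | rfl | rfl
  · right; left; rw [mul_one]
  · left; exact hA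
  · right; right; right; left; rfl
  · right; right; left; rw [← mul_assoc, hA, one_mul]
  · right; right; right; right; right; rw [mul_assoc]
  · right; right; right; right; left
    have : A * (A * B * A) = (A * A) * (B * A) := by group
    rw [this, hA, one_mul]

lemma mulB : ∀ y ∈ S, B * y ∈ S := by
  intro y hy
  simp only [S, Set.mem_insert_iff, Set.mem_singleton_iff] at hy ⊢
  rcases hy with rfl | rfl | rfl | rfl | rfl | rfl
  · right; right; left; rw [mul_one]
  · right; right; right; right; left; rfl
  · left; exact hB
  · right; right; right; right; right
    have : B * (A * B) = B * A * B := by group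
    rw [this, ← hR]
  · right; left
    have : B * (B * A) = (B * B) * A := by group
    rw [this, hB, one_mul]
  · right; right; right; left
    have h1 : B * (A * B * A) = (B * A * B) * A := by group
    have h2 : (A * B * A) * A = (A * B) * (A * A) := by group
    rw [h1, ← hR, h2, hA, mul_one]

lemma Ainv : A⁻¹ = A := inv_eq_of_mul_eq_one_left hA
lemma Binv : B⁻¹ = B := inv_eq_of_mul_eq_one_left hB

lemma mem_S : ∀ x : K, x ∈ S := by
  have hgen : Subgroup.closure (Set.range fun t : Bool => π (PresentedGroup.of t)) = ⊤ := by
    have h0 : (fun t : Bool => π (PresentedGroup.of t)) =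
        π ∘ (PresentedGroup.of : Bool → TrefoilGroup) := rfl
    rw [h0, Set.range_comp, ← MonoidHom.map_closure, PresentedGroup.closure_range_of,
      ← MonoidHom.range_eq_map, MonoidHom.range_eq_top]
    exact QuotientGroup.mk'_surjective _
  intro x
  have hx : x ∈ Subgroup.closure (Set.range fun t : Bool => π (PresentedGroup.of t)) := by
    rw [hgen]; exact Subgroup.mem_top x
  induction hx using Subgroup.closure_induction_left with
  | one => exact one_mem_S
  | mul_left x hx y hy ih =>
    obtain ⟨t, rfl⟩ := hx
    cases t
    · exact mulB y ih
    · exact mulA y ih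
  | inv_mul_cancel x hx y hy ih =>
    obtain ⟨t, rfl⟩ := hx
    cases t
    · show B⁻¹ * y ∈ S
      rw [Binv]; exact mulB y ih
    · show A⁻¹ * y ∈ S
      rw [Ainv]; exact mulA y ih

/-- enumeration of `K` -/
def g : Fin 6 → K := ![1, A, B, A * B, B * A, A * B * A]

lemma g_surj : Function.Surjective g := by
  intro x
  have := mem_S x
  simp only [S, Set.mem_insert_iff, Set.mem_singleton_iff] at this
  rcases this with rfl | rfl | rfl | rfl | rfl | rfl
  · exact ⟨0, rfl⟩
  · exact ⟨1, rfl⟩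
  · exact ⟨2, rfl⟩
  · exact ⟨3, rfl⟩
  · exact ⟨4, rfl⟩
  · exact ⟨5, rfl⟩

lemma M_le_ker : M ≤ f3.ker := by
  apply Subgroup.normalClosure_le_normal
  intro r hr
  rw [Set.mem_singleton_iff] at hr
  subst hr
  simp only [SetLike.mem_coe, MonoidHom.mem_ker, map_pow, f3_of]
  decide

/-- `f3` descends to `K`. -/
def F : K →* Equiv.Perm (Fin 3) := QuotientGroup.lift M f3 M_le_ker

lemma F_pi (x : TrefoilGroup) : F (π x) = f3 x := rfl

lemma g_inj : Function.Injective g := by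
  have hv : F ∘ g = ![1, permOf true, permOf false, permOf true * permOf false,
      permOf false * permOf true, permOf true * permOf false * permOf true] := by
    funext i
    fin_cases i <;>
      simp [g, A, B, F_pi, map_mul, f3_of, Matrix.cons_val_zero, Matrix.cons_val_one,
        mul_assoc] <;> rfl
  have hinj : Function.Injective ![(1 : Equiv.Perm (Fin 3)), permOf true, permOf false,
      permOf true * permOf false, permOf false * permOf true,
      permOf true * permOf false * permOf true] := by decide
  intro i j hij
  apply hinj
  rw [← hv]
  simp [Function.comp, hij]

instance : Finite K := Finite.of_surjective g g_surj

lemma card_K : Nat.card K = 6 := by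
  have h1 : Nat.card K ≤ 6 := by
    simpa using Nat.card_le_card_of_surjective g g_surj
  have h2 : 6 ≤ Nat.card K := by
    simpa using Nat.card_le_card_of_injective g g_inj
  omega

lemma M_index : M.index = 6 := card_K

end

end Statement7Aux

/-- With `φ₂ : G → ℤ/2ℤ` sending both generators to `1`, `U₂ = ker φ₂`
and `M₂` the normal closure of `{a²}`, we have `M₂ ≤ U₂` and `U₂/M₂ ≅ ℤ/3ℤ`. -/
theorem statement7 (φ : TrefoilGroup →* Multiplicative (ZMod 2))
    (hφa : φ (PresentedGroup.of true) = Multiplicative.ofAdd 1)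
    (hφb : φ (PresentedGroup.of false) = Multiplicative.ofAdd 1) :
    Subgroup.normalClosure {(PresentedGroup.of true : TrefoilGroup) ^ 2} ≤ φ.ker ∧
    Nonempty
      ((↥φ.ker ⧸ (Subgroup.normalClosure
          {(PresentedGroup.of true : TrefoilGroup) ^ 2}).subgroupOf φ.ker)
        ≃* Multiplicative (ZMod 3)) := by
  have hMle : Subgroup.normalClosure {(PresentedGroup.of true : TrefoilGroup) ^ 2} ≤ φ.ker := by
    apply Subgroup.normalClosure_le_normal
    intro r hr
    rw [Set.mem_singleton_iff] at hr
    subst hr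
    simp only [SetLike.mem_coe, MonoidHom.mem_ker, map_pow, hφa]
    decide
  refine ⟨hMle, ?_⟩
  -- φ is surjective
  have hsurj : Function.Surjective φ := by
    intro y
    have hall : ∀ z : Multiplicative (ZMod 2), z = 1 ∨ z = Multiplicative.ofAdd 1 := by decide
    rcases hall y with rfl | rfl
    · exact ⟨1, map_one φ⟩
    · exact ⟨PresentedGroup.of true, hφa⟩
  have hker_index : φ.ker.index = 2 := by
    rw [Subgroup.index_ker]
    have : φ.range = ⊤ := MonoidHom.range_eq_top.2 hsurj
    rw [this, Subgroup.card_top, Nat.card_eq_fintype_card]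
    rfl
  have hrelindex :
      (Subgroup.normalClosure {(PresentedGroup.of true : TrefoilGroup) ^ 2}).relIndex φ.ker
      = 3 := by
    have := Subgroup.relIndex_mul_index hMle
    rw [hker_index, Statement7Aux.M_index] at this
    omega
  have hcard : Nat.card (↥φ.ker ⧸ (Subgroup.normalClosure
      {(PresentedGroup.of true : TrefoilGroup) ^ 2}).subgroupOf φ.ker) = 3 := hrelindex
  haveI : Fact (Nat.Prime 3) := ⟨by norm_num⟩
  haveI := isCyclic_of_prime_card hcard
  exact ⟨mulEquivOfCyclicCardEq (by simp [hcard, Nat.card_eq_fintype_card])⟩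
end

section
/- Let G = ⟨a, b ∣ aba = bab⟩ be the trefoil knot group, let φ₃ : G → ℤ/3ℤ be the homomorphism sending both generators a and b to 1, let U₃ = ker φ₃, and let M₃ be the normal closure in G of {a³}. Then M₃ ≤ U₃ and the quotient group U₃/M₃ is isomorphic to the quaternion group Q₈ of order 8. -/
namespace S8

def sg : QuaternionGroup 2 → QuaternionGroup 2
  | .a i => if i = 1 then .xa 0 else if i = 3 then .xa 2 else .a i
  | .xa i => if i = 0 then .xa 3 else if i = 1 then .a 3 else if i = 2 then .xa 1 else .a 1

def sp (t : ZMod 3) : QuaternionGroup 2 → QuaternionGroup 2 := sg^[t.val]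

lemma sp_mul (t : ZMod 3) (x y : QuaternionGroup 2) : sp t (x * y) = sp t x * sp t y := by
  revert t x y; decide

lemma sp_add (s t : ZMod 3) (x : QuaternionGroup 2) : sp (s + t) x = sp s (sp t x) := by
  revert s t x; decide

lemma sp_one (t : ZMod 3) : sp t 1 = 1 := by revert t; decide

@[ext] structure K24 where
  q : QuaternionGroup 2
  t : ZMod 3
  deriving DecidableEq, Fintype

instance : Mul K24 := ⟨fun x y => ⟨x.q * sp x.t y.q, x.t + y.t⟩⟩
instance : One K24 := ⟨⟨1, 0⟩⟩
instance : Inv K24 := ⟨fun x => ⟨sp (-x.t) x.q⁻¹, -x.t⟩⟩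

lemma K24.mul_def (x y : K24) : x * y = ⟨x.q * sp x.t y.q, x.t + y.t⟩ := rfl

instance : Group K24 where
  mul_assoc x y z := by
    ext
    · show (x.q * sp x.t y.q) * sp (x.t + y.t) z.q = x.q * sp x.t (y.q * sp y.t z.q)
      rw [sp_mul, sp_add, mul_assoc]
    · show x.t + y.t + z.t = x.t + (y.t + z.t); ring
  one_mul x := by
    ext
    · show (1 : QuaternionGroup 2) * sp 0 x.q = x.q
      rw [one_mul]; rfl
    · show (0 : ZMod 3) + x.t = x.t; ring
  mul_one x := by
    ext
    · show x.q * sp x.t 1 = x.q; rw [sp_one, mul_one]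
    · show x.t + 0 = x.t; ring
  inv_mul_cancel x := by
    show (⟨sp (-x.t) x.q⁻¹, -x.t⟩ * x : K24) = 1
    rw [K24.mul_def]
    ext
    · show sp (-x.t) x.q⁻¹ * sp (-x.t) x.q = 1
      rw [← sp_mul, inv_mul_cancel, sp_one]
    · show -x.t + x.t = 0; ring

def A : K24 := ⟨.a 3, 1⟩
def B : K24 := ⟨.xa 2, 1⟩

/-- projection to `Multiplicative (ZMod 3)`. -/
def π2 : K24 →* Multiplicative (ZMod 3) where
  toFun x := Multiplicative.ofAdd x.t
  map_one' := rfl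
  map_mul' _ _ := rfl

def fgen : Bool → K24 := fun x => if x then A else B

lemma relhold : ∀ r ∈ trefoilRels, FreeGroup.lift fgen r = 1 := by
  intro r hr
  simp only [trefoilRels, Set.mem_singleton_iff] at hr
  subst hr
  simp only [map_mul, map_inv, FreeGroup.lift_apply_of]
  decide

def κ : TrefoilGroup →* K24 := PresentedGroup.toGroup relhold

abbrev N : Subgroup TrefoilGroup :=
  Subgroup.normalClosure {(PresentedGroup.of true : TrefoilGroup) ^ 3}

abbrev K := TrefoilGroup ⧸ N

def πK : TrefoilGroup →* K := QuotientGroup.mk' N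

lemma κA : κ (PresentedGroup.of true) = A := PresentedGroup.toGroup.of relhold
lemma κB : κ (PresentedGroup.of false) = B := PresentedGroup.toGroup.of relhold

lemma hNκ : N ≤ κ.ker := by
  apply Subgroup.normalClosure_le_normal
  intro x hx
  simp only [Set.mem_singleton_iff] at hx
  subst hx
  rw [SetLike.mem_coe, MonoidHom.mem_ker, map_pow, κA]
  decide

def κb : K →* K24 := QuotientGroup.lift N κ (fun _ hx => hNκ hx)

lemma κb_π (g : TrefoilGroup) : κb (πK g) = κ g := rfl

def α : K := πK (PresentedGroup.of true)
def β : K := πK (PresentedGroup.of false)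

lemma hκα : κb α = A := κA
lemma hκβ : κb β = B := κB

lemma hrel : α * β * α = β * α * β := by
  have h : (PresentedGroup.of true * PresentedGroup.of false * PresentedGroup.of true *
      (PresentedGroup.of false * PresentedGroup.of true * PresentedGroup.of false)⁻¹ :
      TrefoilGroup) = 1 := by
    have hm : (FreeGroup.of true * FreeGroup.of false * FreeGroup.of true *
        (FreeGroup.of false * FreeGroup.of true * FreeGroup.of false)⁻¹) ∈
        Subgroup.normalClosure trefoilRels :=
      Subgroup.subset_normalClosure rfl
    have := (QuotientGroup.eq_one_iff _).mpr hm
    exact this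
  have h2 := congrArg πK h
  simp only [map_mul, map_inv, map_one] at h2
  have := mul_inv_eq_one.mp h2
  exact this

lemma ha3 : α ^ 3 = 1 := by
  have hm : ((PresentedGroup.of true : TrefoilGroup) ^ 3) ∈ N :=
    Subgroup.subset_normalClosure rfl
  have := (QuotientGroup.eq_one_iff _).mpr hm
  show (πK (PresentedGroup.of true)) ^ 3 = 1
  rw [← map_pow]
  exact this

lemma hb3 : β ^ 3 = 1 := by
  have hc : (α*β)*α*(α*β)⁻¹ = β := by
    calc (α*β)*α*(α*β)⁻¹ = (α*β*α)*(α*β)⁻¹ := by group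
    _ = (β*α*β)*(α*β)⁻¹ := by rw [hrel]
    _ = β := by group
  calc β ^ 3 = ((α*β)*α*(α*β)⁻¹) ^ 3 := by rw [hc]
  _ = (α*β)*α^3*(α*β)⁻¹ := by rw [conj_pow]
  _ = 1 := by rw [ha3]; group

def gen : Bool → K
  | true => α
  | false => β

@[simp] lemma gen_t : gen true = α := rfl
@[simp] lemma gen_f : gen false = β := rfl
def P (l : List Bool) : K := (l.map gen).prod

lemma keyP (x y : List Bool) {u v : List Bool} (h : P u = P v) :
    P (x ++ u ++ y) = P (x ++ v ++ y) := by
  have h' : (List.map gen u).prod = (List.map gen v).prod := h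
  simp only [P, List.map_append, List.prod_append, h']

lemma hA3 : P [true,true,true] = P [] := by
  simp only [P, List.map_cons, List.map_nil, List.prod_cons, List.prod_nil, gen_t, gen_f, mul_one]
  rw [← mul_assoc, ← pow_three']
  exact ha3

lemma hB3 : P [false,false,false] = P [] := by
  simp only [P, List.map_cons, List.map_nil, List.prod_cons, List.prod_nil, gen_t, gen_f, mul_one]
  rw [← mul_assoc, ← pow_three']
  exact hb3

lemma hR : P [false,true,false] = P [true,false,true] := by
  simp only [P, List.map_cons, List.map_nil, List.prod_cons, List.prod_nil, gen_t, gen_f,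
    mul_one]
  rw [← mul_assoc, ← mul_assoc, hrel]

lemma keyP' (x y u v w w' : List Bool) (h : P u = P v)
    (hw : x ++ u ++ y = w) (hw' : x ++ v ++ y = w') : P w = P w' := by
  subst hw hw'
  exact keyP x y h

lemma hD1 : P [false, true, true, false, true] = P [true, false, true, true, false] :=
  ((keyP' [false, true] [] [true, false, true] [false, true, false] [false, true, true, false, true] [false, true, false, true, false] hR.symm rfl rfl)).trans (keyP' [] [true, false] [false, true, false] [true, false, true] [false, true, false, true, false] [true, false, true, true, false] hR rfl rfl)

lemma hD2 : P [true, false, true, true, false, false] = P [false, false, true] :=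
  (((keyP' [] [true, false, false] [true, false, true] [false, true, false] [true, false, true, true, false, false] [false, true, false, true, false, false] hR.symm rfl rfl)).trans (keyP' [false] [false, false] [true, false, true] [false, true, false] [false, true, false, true, false, false] [false, false, true, false, false, false] hR.symm rfl rfl)).trans (keyP' [false, false, true] [] [false, false, false] [] [false, false, true, false, false, false] [false, false, true] hB3 rfl rfl)

lemma hD3 : P [false, true, true, false, false] = P [true, true, false, false, true] :=
  ((keyP' [] [false, true, true, false, false] [] [true, true, true] [false, true, true, false, false] [true, true, true, false, true, true, false, false] hA3.symm rfl rfl)).trans (keyP' [true, true] [] [true, false, true, true, false, false] [false, false, true] [true, true, true, false, true, true, false, false] [true, true, false, false, true] hD2 rfl rfl)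

lemma hD4 : P [false, false, true, true, false] = P [true, false, false, true, true] :=
  (((keyP' [] [true, false] [false, false, true] [true, false, true, true, false, false] [false, false, true, true, false] [true, false, true, true, false, false, true, false] hD2.symm rfl rfl)).trans (keyP' [true, false] [false] [true, true, false, false, true] [false, true, true, false, false] [true, false, true, true, false, false, true, false] [true, false, false, true, true, false, false, false] hD3.symm rfl rfl)).trans (keyP' [true, false, false, true, true] [] [false, false, false] [] [true, false, false, true, true, false, false, false] [true, false, false, true, true] hB3 rfl rfl)

def codes : List (List Bool) := [[], [true], [false], [true, true], [true, false], [false, true], [false, false], [true, true, false], [true, false, true], [true, false, false], [false, true, true], [false, false, true], [true, true, false, true], [true, true, false, false], [true, false, true, true], [true, false, false, true], [false, true, true, false], [false, false, true, true], [true, true, false, true, true], [true, true, false, false, true], [true, false, true, true, false], [true, false, false, true, true], [true, true, false, true, true, false], [true, true, false, false, true, true]]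

def elemsL : List K24 := [⟨.a 0, 0⟩, ⟨.a 3, 1⟩, ⟨.xa 2, 1⟩, ⟨.xa 3, 2⟩, ⟨.xa 2, 2⟩, ⟨.a 2, 2⟩, ⟨.a 1, 2⟩, ⟨.xa 2, 0⟩, ⟨.a 1, 0⟩, ⟨.xa 1, 0⟩, ⟨.xa 3, 0⟩, ⟨.xa 0, 0⟩, ⟨.xa 1, 1⟩, ⟨.a 2, 1⟩, ⟨.a 0, 1⟩, ⟨.xa 0, 1⟩, ⟨.a 1, 1⟩, ⟨.xa 3, 1⟩, ⟨.a 3, 2⟩, ⟨.xa 0, 2⟩, ⟨.xa 1, 2⟩, ⟨.a 0, 2⟩, ⟨.a 2, 0⟩, ⟨.a 3, 0⟩]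

def codeN : Nat → List Bool := fun n => codes.getD n []

def sP : Fin 24 → K := fun n => P (codeN n.val)

def eF : Fin 24 → K24 := fun n => elemsL.getD n.val 1

lemma obA_0 : P [true] = P [true] :=
  rfl

lemma obA_1 : P [true, true] = P [true, true] :=
  rfl

lemma obA_2 : P [true, false] = P [true, false] :=
  rfl

lemma obA_3 : P [true, true, true] = P [] :=
  (keyP' [] [] [true, true, true] [] [true, true, true] [] hA3 rfl rfl)

lemma obA_4 : P [true, true, false] = P [true, true, false] :=
  rfl

lemma obA_5 : P [true, false, true] = P [true, false, true] :=
  rfl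

lemma obA_6 : P [true, false, false] = P [true, false, false] :=
  rfl

lemma obA_7 : P [true, true, true, false] = P [false] :=
  (keyP' [] [false] [true, true, true] [] [true, true, true, false] [false] hA3 rfl rfl)

lemma obA_8 : P [true, true, false, true] = P [true, true, false, true] :=
  rfl

lemma obA_9 : P [true, true, false, false] = P [true, true, false, false] :=
  rfl

lemma obA_10 : P [true, false, true, true] = P [true, false, true, true] :=
  rfl

lemma obA_11 : P [true, false, false, true] = P [true, false, false, true] :=
  rfl

lemma obA_12 : P [true, true, true, false, true] = P [false, true] :=
  (keyP' [] [false, true] [true, true, true] [] [true, true, true, false, true] [false, true] hA3 rfl rfl)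

lemma obA_13 : P [true, true, true, false, false] = P [false, false] :=
  (keyP' [] [false, false] [true, true, true] [] [true, true, true, false, false] [false, false] hA3 rfl rfl)

lemma obA_14 : P [true, true, false, true, true] = P [true, true, false, true, true] :=
  rfl

lemma obA_15 : P [true, true, false, false, true] = P [true, true, false, false, true] :=
  rfl

lemma obA_16 : P [true, false, true, true, false] = P [true, false, true, true, false] :=
  rfl

lemma obA_17 : P [true, false, false, true, true] = P [true, false, false, true, true] :=
  rfl

lemma obA_18 : P [true, true, true, false, true, true] = P [false, true, true] :=
  (keyP' [] [false, true, true] [true, true, true] [] [true, true, true, false, true, true] [false, true, true] hA3 rfl rfl)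

lemma obA_19 : P [true, true, true, false, false, true] = P [false, false, true] :=
  (keyP' [] [false, false, true] [true, true, true] [] [true, true, true, false, false, true] [false, false, true] hA3 rfl rfl)

lemma obA_20 : P [true, true, false, true, true, false] = P [true, true, false, true, true, false] :=
  rfl

lemma obA_21 : P [true, true, false, false, true, true] = P [true, true, false, false, true, true] :=
  rfl

lemma obA_22 : P [true, true, true, false, true, true, false] = P [false, true, true, false] :=
  (keyP' [] [false, true, true, false] [true, true, true] [] [true, true, true, false, true, true, false] [false, true, true, false] hA3 rfl rfl)

lemma obA_23 : P [true, true, true, false, false, true, true] = P [false, false, true, true] :=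
  (keyP' [] [false, false, true, true] [true, true, true] [] [true, true, true, false, false, true, true] [false, false, true, true] hA3 rfl rfl)

lemma obB_0 : P [false] = P [false] :=
  rfl

lemma obB_1 : P [false, true] = P [false, true] :=
  rfl

lemma obB_2 : P [false, false] = P [false, false] :=
  rfl

lemma obB_3 : P [false, true, true] = P [false, true, true] :=
  rfl

lemma obB_4 : P [false, true, false] = P [true, false, true] :=
  (keyP' [] [] [false, true, false] [true, false, true] [false, true, false] [true, false, true] hR rfl rfl)

lemma obB_5 : P [false, false, true] = P [false, false, true] :=
  rfl

lemma obB_6 : P [false, false, false] = P [] :=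
  (keyP' [] [] [false, false, false] [] [false, false, false] [] hB3 rfl rfl)

lemma obB_7 : P [false, true, true, false] = P [false, true, true, false] :=
  rfl

lemma obB_8 : P [false, true, false, true] = P [true, false, true, true] :=
  (keyP' [] [true] [false, true, false] [true, false, true] [false, true, false, true] [true, false, true, true] hR rfl rfl)

lemma obB_9 : P [false, true, false, false] = P [true, true, false, true] :=
  ((keyP' [] [false] [false, true, false] [true, false, true] [false, true, false, false] [true, false, true, false] hR rfl rfl)).trans (keyP' [true] [] [false, true, false] [true, false, true] [true, false, true, false] [true, true, false, true] hR rfl rfl)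

lemma obB_10 : P [false, false, true, true] = P [false, false, true, true] :=
  rfl

lemma obB_11 : P [false, false, false, true] = P [true] :=
  (keyP' [] [true] [false, false, false] [] [false, false, false, true] [true] hB3 rfl rfl)

lemma obB_12 : P [false, true, true, false, true] = P [true, false, true, true, false] :=
  (keyP' [] [] [false, true, true, false, true] [true, false, true, true, false] [false, true, true, false, true] [true, false, true, true, false] hD1 rfl rfl)

lemma obB_13 : P [false, true, true, false, false] = P [true, true, false, false, true] :=
  (keyP' [] [] [false, true, true, false, false] [true, true, false, false, true] [false, true, true, false, false] [true, true, false, false, true] hD3 rfl rfl)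

lemma obB_14 : P [false, true, false, true, true] = P [true, false] :=
  ((keyP' [] [true, true] [false, true, false] [true, false, true] [false, true, false, true, true] [true, false, true, true, true] hR rfl rfl)).trans (keyP' [true, false] [] [true, true, true] [] [true, false, true, true, true] [true, false] hA3 rfl rfl)

lemma obB_15 : P [false, true, false, false, true] = P [true, true, false, true, true] :=
  ((keyP' [] [false, true] [false, true, false] [true, false, true] [false, true, false, false, true] [true, false, true, false, true] hR rfl rfl)).trans (keyP' [true] [true] [false, true, false] [true, false, true] [true, false, true, false, true] [true, true, false, true, true] hR rfl rfl)

lemma obB_16 : P [false, false, true, true, false] = P [true, false, false, true, true] :=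
  (keyP' [] [] [false, false, true, true, false] [true, false, false, true, true] [false, false, true, true, false] [true, false, false, true, true] hD4 rfl rfl)

lemma obB_17 : P [false, false, false, true, true] = P [true, true] :=
  (keyP' [] [true, true] [false, false, false] [] [false, false, false, true, true] [true, true] hB3 rfl rfl)

lemma obB_18 : P [false, true, true, false, true, true] = P [true, true, false, true, true, false] :=
  ((keyP' [] [true] [false, true, true, false, true] [true, false, true, true, false] [false, true, true, false, true, true] [true, false, true, true, false, true] hD1 rfl rfl)).trans (keyP' [true] [] [false, true, true, false, true] [true, false, true, true, false] [true, false, true, true, false, true] [true, true, false, true, true, false] hD1 rfl rfl)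

lemma obB_19 : P [false, true, true, false, false, true] = P [true, true, false, false, true, true] :=
  (keyP' [] [true] [false, true, true, false, false] [true, true, false, false, true] [false, true, true, false, false, true] [true, true, false, false, true, true] hD3 rfl rfl)

lemma obB_20 : P [false, true, false, true, true, false] = P [true, false, false] :=
  ((keyP' [] [true, true, false] [false, true, false] [true, false, true] [false, true, false, true, true, false] [true, false, true, true, true, false] hR rfl rfl)).trans (keyP' [true, false] [false] [true, true, true] [] [true, false, true, true, true, false] [true, false, false] hA3 rfl rfl)

lemma obB_21 : P [false, true, false, false, true, true] = P [true, true, false] :=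
  (((keyP' [] [false, true, true] [false, true, false] [true, false, true] [false, true, false, false, true, true] [true, false, true, false, true, true] hR rfl rfl)).trans (keyP' [true] [true, true] [false, true, false] [true, false, true] [true, false, true, false, true, true] [true, true, false, true, true, true] hR rfl rfl)).trans (keyP' [true, true, false] [] [true, true, true] [] [true, true, false, true, true, true] [true, true, false] hA3 rfl rfl)

lemma obB_22 : P [false, true, true, false, true, true, false] = P [true, false, false, true] :=
  (((keyP' [] [true, false] [false, true, true, false, true] [true, false, true, true, false] [false, true, true, false, true, true, false] [true, false, true, true, false, true, false] hD1 rfl rfl)).trans (keyP' [true, false, true, true] [] [false, true, false] [true, false, true] [true, false, true, true, false, true, false] [true, false, true, true, true, false, true] hR rfl rfl)).trans (keyP' [true, false] [false, true] [true, true, true] [] [true, false, true, true, true, false, true] [true, false, false, true] hA3 rfl rfl)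

lemma obB_23 : P [false, true, true, false, false, true, true] = P [true, true, false, false] :=
  ((keyP' [] [true, true] [false, true, true, false, false] [true, true, false, false, true] [false, true, true, false, false, true, true] [true, true, false, false, true, true, true] hD3 rfl rfl)).trans (keyP' [true, true, false, false] [] [true, true, true] [] [true, true, false, false, true, true, true] [true, true, false, false] hA3 rfl rfl)

lemma stepA : ∀ n : Fin 24, ∃ m : Fin 24, α * sP n = sP m := by
  intro n
  fin_cases n
  · exact ⟨1, obA_0⟩
  · exact ⟨3, obA_1⟩
  · exact ⟨4, obA_2⟩
  · exact ⟨0, obA_3⟩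
  · exact ⟨7, obA_4⟩
  · exact ⟨8, obA_5⟩
  · exact ⟨9, obA_6⟩
  · exact ⟨2, obA_7⟩
  · exact ⟨12, obA_8⟩
  · exact ⟨13, obA_9⟩
  · exact ⟨14, obA_10⟩
  · exact ⟨15, obA_11⟩
  · exact ⟨5, obA_12⟩
  · exact ⟨6, obA_13⟩
  · exact ⟨18, obA_14⟩
  · exact ⟨19, obA_15⟩
  · exact ⟨20, obA_16⟩
  · exact ⟨21, obA_17⟩
  · exact ⟨10, obA_18⟩
  · exact ⟨11, obA_19⟩
  · exact ⟨22, obA_20⟩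
  · exact ⟨23, obA_21⟩
  · exact ⟨16, obA_22⟩
  · exact ⟨17, obA_23⟩

lemma stepB : ∀ n : Fin 24, ∃ m : Fin 24, β * sP n = sP m := by
  intro n
  fin_cases n
  · exact ⟨2, obB_0⟩
  · exact ⟨5, obB_1⟩
  · exact ⟨6, obB_2⟩
  · exact ⟨10, obB_3⟩
  · exact ⟨8, obB_4⟩
  · exact ⟨11, obB_5⟩
  · exact ⟨0, obB_6⟩
  · exact ⟨16, obB_7⟩
  · exact ⟨14, obB_8⟩
  · exact ⟨12, obB_9⟩
  · exact ⟨17, obB_10⟩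
  · exact ⟨1, obB_11⟩
  · exact ⟨20, obB_12⟩
  · exact ⟨19, obB_13⟩
  · exact ⟨4, obB_14⟩
  · exact ⟨18, obB_15⟩
  · exact ⟨21, obB_16⟩
  · exact ⟨3, obB_17⟩
  · exact ⟨22, obB_18⟩
  · exact ⟨23, obB_19⟩
  · exact ⟨9, obB_20⟩
  · exact ⟨7, obB_21⟩
  · exact ⟨15, obB_22⟩
  · exact ⟨13, obB_23⟩

lemma sect : ∀ n : Fin 24, κb (sP n) = eF n := by
  intro n
  fin_cases n
  · have h : κb (P []) = (⟨.a 0, 0⟩ : K24) := by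
      simp only [P, List.map_cons, List.map_nil, List.prod_cons, List.prod_nil,
        gen_t, gen_f, map_mul, map_one, mul_one, hκα, hκβ]
      decide
    exact h
  · have h : κb (P [true]) = (⟨.a 3, 1⟩ : K24) := by
      simp only [P, List.map_cons, List.map_nil, List.prod_cons, List.prod_nil,
        gen_t, gen_f, map_mul, map_one, mul_one, hκα, hκβ]
      decide
    exact h
  · have h : κb (P [false]) = (⟨.xa 2, 1⟩ : K24) := by
      simp only [P, List.map_cons, List.map_nil, List.prod_cons, List.prod_nil,
        gen_t, gen_f, map_mul, map_one, mul_one, hκα, hκβ]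
      decide
    exact h
  · have h : κb (P [true, true]) = (⟨.xa 3, 2⟩ : K24) := by
      simp only [P, List.map_cons, List.map_nil, List.prod_cons, List.prod_nil,
        gen_t, gen_f, map_mul, map_one, mul_one, hκα, hκβ]
      decide
    exact h
  · have h : κb (P [true, false]) = (⟨.xa 2, 2⟩ : K24) := by
      simp only [P, List.map_cons, List.map_nil, List.prod_cons, List.prod_nil,
        gen_t, gen_f, map_mul, map_one, mul_one, hκα, hκβ]
      decide
    exact h
  · have h : κb (P [false, true]) = (⟨.a 2, 2⟩ : K24) := by
      simp only [P, List.map_cons, List.map_nil, List.prod_cons, List.prod_nil,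
        gen_t, gen_f, map_mul, map_one, mul_one, hκα, hκβ]
      decide
    exact h
  · have h : κb (P [false, false]) = (⟨.a 1, 2⟩ : K24) := by
      simp only [P, List.map_cons, List.map_nil, List.prod_cons, List.prod_nil,
        gen_t, gen_f, map_mul, map_one, mul_one, hκα, hκβ]
      decide
    exact h
  · have h : κb (P [true, true, false]) = (⟨.xa 2, 0⟩ : K24) := by
      simp only [P, List.map_cons, List.map_nil, List.prod_cons, List.prod_nil,
        gen_t, gen_f, map_mul, map_one, mul_one, hκα, hκβ]
      decide
    exact h
  · have h : κb (P [true, false, true]) = (⟨.a 1, 0⟩ : K24) := by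
      simp only [P, List.map_cons, List.map_nil, List.prod_cons, List.prod_nil,
        gen_t, gen_f, map_mul, map_one, mul_one, hκα, hκβ]
      decide
    exact h
  · have h : κb (P [true, false, false]) = (⟨.xa 1, 0⟩ : K24) := by
      simp only [P, List.map_cons, List.map_nil, List.prod_cons, List.prod_nil,
        gen_t, gen_f, map_mul, map_one, mul_one, hκα, hκβ]
      decide
    exact h
  · have h : κb (P [false, true, true]) = (⟨.xa 3, 0⟩ : K24) := by
      simp only [P, List.map_cons, List.map_nil, List.prod_cons, List.prod_nil,
        gen_t, gen_f, map_mul, map_one, mul_one, hκα, hκβ]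
      decide
    exact h
  · have h : κb (P [false, false, true]) = (⟨.xa 0, 0⟩ : K24) := by
      simp only [P, List.map_cons, List.map_nil, List.prod_cons, List.prod_nil,
        gen_t, gen_f, map_mul, map_one, mul_one, hκα, hκβ]
      decide
    exact h
  · have h : κb (P [true, true, false, true]) = (⟨.xa 1, 1⟩ : K24) := by
      simp only [P, List.map_cons, List.map_nil, List.prod_cons, List.prod_nil,
        gen_t, gen_f, map_mul, map_one, mul_one, hκα, hκβ]
      decide
    exact h
  · have h : κb (P [true, true, false, false]) = (⟨.a 2, 1⟩ : K24) := by
      simp only [P, List.map_cons, List.map_nil, List.prod_cons, List.prod_nil,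
        gen_t, gen_f, map_mul, map_one, mul_one, hκα, hκβ]
      decide
    exact h
  · have h : κb (P [true, false, true, true]) = (⟨.a 0, 1⟩ : K24) := by
      simp only [P, List.map_cons, List.map_nil, List.prod_cons, List.prod_nil,
        gen_t, gen_f, map_mul, map_one, mul_one, hκα, hκβ]
      decide
    exact h
  · have h : κb (P [true, false, false, true]) = (⟨.xa 0, 1⟩ : K24) := by
      simp only [P, List.map_cons, List.map_nil, List.prod_cons, List.prod_nil,
        gen_t, gen_f, map_mul, map_one, mul_one, hκα, hκβ]
      decide
    exact h
  · have h : κb (P [false, true, true, false]) = (⟨.a 1, 1⟩ : K24) := by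
      simp only [P, List.map_cons, List.map_nil, List.prod_cons, List.prod_nil,
        gen_t, gen_f, map_mul, map_one, mul_one, hκα, hκβ]
      decide
    exact h
  · have h : κb (P [false, false, true, true]) = (⟨.xa 3, 1⟩ : K24) := by
      simp only [P, List.map_cons, List.map_nil, List.prod_cons, List.prod_nil,
        gen_t, gen_f, map_mul, map_one, mul_one, hκα, hκβ]
      decide
    exact h
  · have h : κb (P [true, true, false, true, true]) = (⟨.a 3, 2⟩ : K24) := by
      simp only [P, List.map_cons, List.map_nil, List.prod_cons, List.prod_nil,
        gen_t, gen_f, map_mul, map_one, mul_one, hκα, hκβ]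
      decide
    exact h
  · have h : κb (P [true, true, false, false, true]) = (⟨.xa 0, 2⟩ : K24) := by
      simp only [P, List.map_cons, List.map_nil, List.prod_cons, List.prod_nil,
        gen_t, gen_f, map_mul, map_one, mul_one, hκα, hκβ]
      decide
    exact h
  · have h : κb (P [true, false, true, true, false]) = (⟨.xa 1, 2⟩ : K24) := by
      simp only [P, List.map_cons, List.map_nil, List.prod_cons, List.prod_nil,
        gen_t, gen_f, map_mul, map_one, mul_one, hκα, hκβ]
      decide
    exact h
  · have h : κb (P [true, false, false, true, true]) = (⟨.a 0, 2⟩ : K24) := by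
      simp only [P, List.map_cons, List.map_nil, List.prod_cons, List.prod_nil,
        gen_t, gen_f, map_mul, map_one, mul_one, hκα, hκβ]
      decide
    exact h
  · have h : κb (P [true, true, false, true, true, false]) = (⟨.a 2, 0⟩ : K24) := by
      simp only [P, List.map_cons, List.map_nil, List.prod_cons, List.prod_nil,
        gen_t, gen_f, map_mul, map_one, mul_one, hκα, hκβ]
      decide
    exact h
  · have h : κb (P [true, true, false, false, true, true]) = (⟨.a 3, 0⟩ : K24) := by
      simp only [P, List.map_cons, List.map_nil, List.prod_cons, List.prod_nil,
        gen_t, gen_f, map_mul, map_one, mul_one, hκα, hκβ]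
      decide
    exact h

lemma einj : ∀ n m : Fin 24, eF n = eF m → n = m := by decide

lemma esurj : ∀ x : K24, ∃ n : Fin 24, eF n = x := by decide

lemma sP_inj : Function.Injective sP := by
  intro n m h
  exact einj n m (by rw [← sect n, ← sect m, h])

lemma hgen : Subgroup.closure ({α, β} : Set K) = ⊤ := by
  have h1 := PresentedGroup.closure_range_of trefoilRels
  have h2 : Subgroup.map πK ⊤ = ⊤ :=
    Subgroup.map_top_of_surjective πK (QuotientGroup.mk'_surjective N)
  rw [← h1, MonoidHom.map_closure] at h2
  have h3 : πK '' Set.range (PresentedGroup.of : Bool → TrefoilGroup) = {α, β} := by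
    rw [← Set.range_comp]
    ext x
    simp only [Set.mem_range, Function.comp_apply, Set.mem_insert_iff, Set.mem_singleton_iff]
    constructor
    · rintro ⟨b, rfl⟩
      cases b
      · right; rfl
      · left; rfl
    · rintro (rfl | rfl)
      · exact ⟨true, rfl⟩
      · exact ⟨false, rfl⟩
  rw [h3] at h2
  exact h2

lemma hp : ∀ x : K, ∀ n : Fin 24, ∃ m : Fin 24, x * sP n = sP m := by
  intro x
  have hx : x ∈ Subgroup.closure ({α, β} : Set K) := hgen ▸ Subgroup.mem_top x
  induction hx using Subgroup.closure_induction with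
  | mem g hg =>
    rcases hg with rfl | rfl
    · exact stepA
    · exact stepB
  | one => exact fun n => ⟨n, one_mul _⟩
  | mul g h _ _ pg ph =>
    intro n
    obtain ⟨m, hm⟩ := ph n
    obtain ⟨k, hk⟩ := pg m
    exact ⟨k, by rw [mul_assoc, hm, hk]⟩
  | inv g _ pg =>
    intro n
    choose F hF using pg
    have hFinj : Function.Injective F := by
      intro i j hij
      apply sP_inj
      apply mul_left_cancel (a := g)
      rw [hF i, hF j, hij]
    obtain ⟨m, hm⟩ := Finite.injective_iff_surjective.mp hFinj n
    refine ⟨m, ?_⟩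
    rw [← hm, ← hF m, ← mul_assoc, inv_mul_cancel, one_mul]

lemma sP_surj : ∀ x : K, ∃ n : Fin 24, sP n = x := by
  intro x
  obtain ⟨m, hm⟩ := hp x 0
  have h0 : sP 0 = 1 := rfl
  rw [h0, mul_one] at hm
  exact ⟨m, hm.symm⟩

lemma κb_inj : Function.Injective κb := by
  intro k1 k2 h
  obtain ⟨n, rfl⟩ := sP_surj k1
  obtain ⟨m, rfl⟩ := sP_surj k2
  rw [sect n, sect m] at h
  exact congrArg sP (einj n m h)

lemma ker_κ : ∀ u : TrefoilGroup, κ u = 1 ↔ u ∈ N := by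
  intro u
  constructor
  · intro h
    have h1 : κb (πK u) = κb 1 := by rw [map_one, κb_π, h]
    have h2 : πK u = 1 := κb_inj h1
    exact (QuotientGroup.eq_one_iff u).mp h2
  · intro h
    exact hNκ h

end S8

/-- With `φ₃ : G → ℤ/3ℤ` sending both generators to `1`, `U₃ = ker φ₃`
and `M₃` the normal closure of `{a³}`, we have `M₃ ≤ U₃` and `U₃/M₃ ≅ Q₈`,
the quaternion group of order 8. -/
theorem statement8 (φ : TrefoilGroup →* Multiplicative (ZMod 3))
    (hφa : φ (PresentedGroup.of true) = Multiplicative.ofAdd 1)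
    (hφb : φ (PresentedGroup.of false) = Multiplicative.ofAdd 1) :
    Subgroup.normalClosure {(PresentedGroup.of true : TrefoilGroup) ^ 3} ≤ φ.ker ∧
    Nonempty
      ((↥φ.ker ⧸ (Subgroup.normalClosure
          {(PresentedGroup.of true : TrefoilGroup) ^ 3}).subgroupOf φ.ker)
        ≃* QuaternionGroup 2) := by
  have hφ : φ = S8.π2.comp S8.κ := by
    apply PresentedGroup.ext
    intro x
    cases x
    · rw [hφb, MonoidHom.comp_apply, S8.κB]; rfl
    · rw [hφa, MonoidHom.comp_apply, S8.κA]; rfl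
  have hNker : S8.N ≤ φ.ker := by
    apply Subgroup.normalClosure_le_normal
    intro x hx
    simp only [Set.mem_singleton_iff] at hx
    subst hx
    rw [SetLike.mem_coe, MonoidHom.mem_ker, map_pow, hφa]
    decide
  refine ⟨hNker, ?_⟩
  have ht : ∀ u : TrefoilGroup, u ∈ φ.ker → (S8.κ u).t = 0 := by
    intro u hu
    rw [MonoidHom.mem_ker, hφ] at hu
    exact congrArg Multiplicative.toAdd hu
  let θ : ↥φ.ker →* QuaternionGroup 2 :=
    { toFun := fun u => (S8.κ u.1).q
      map_one' := by
        have h1 : ((1 : φ.ker) : TrefoilGroup) = 1 := rfl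
        show (S8.κ ((1 : φ.ker) : TrefoilGroup)).q = 1
        rw [h1, map_one]
        rfl
      map_mul' := by
        intro u v
        show (S8.κ (↑u * ↑v)).q = _
        rw [map_mul, S8.K24.mul_def]
        show (S8.κ u.1).q * S8.sp (S8.κ u.1).t (S8.κ v.1).q = _
        rw [ht u.1 u.2]
        rfl }
  have θsurj : Function.Surjective θ := by
    intro q
    obtain ⟨n, hn⟩ := S8.esurj ⟨q, 0⟩
    obtain ⟨g, hg⟩ := QuotientGroup.mk'_surjective S8.N (S8.sP n)
    have hκg : S8.κ g = ⟨q, 0⟩ := by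
      rw [show S8.κ g = S8.κb (QuotientGroup.mk' S8.N g) from rfl, hg, S8.sect n, hn]
    have hφg : g ∈ φ.ker := by
      rw [MonoidHom.mem_ker, hφ, MonoidHom.comp_apply, hκg]
      rfl
    exact ⟨⟨g, hφg⟩, by show (S8.κ g).q = q; rw [hκg]⟩
  have hkerθ : θ.ker = (Subgroup.normalClosure
      {(PresentedGroup.of true : TrefoilGroup) ^ 3}).subgroupOf φ.ker := by
    ext u
    rw [MonoidHom.mem_ker, Subgroup.mem_subgroupOf]
    constructor
    · intro h
      have hq : (S8.κ u.1).q = 1 := h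
      have h1 : S8.κ u.1 = 1 := by
        ext
        · exact hq
        · exact ht u.1 u.2
      exact (S8.ker_κ u.1).mp h1
    · intro h
      have h1 : S8.κ u.1 = 1 := (S8.ker_κ u.1).mpr h
      show (S8.κ u.1).q = 1
      rw [h1]
      rfl
  exact ⟨(QuotientGroup.quotientMulEquivOfEq hkerθ.symm).trans
    (QuotientGroup.quotientKerEquivOfSurjective θ θsurj)⟩
end

section
/- Let G = ⟨a, b ∣ aba = bab⟩ be the trefoil knot group. Then the commutator subgroup [G, G] equals the subgroup of G generated by the two elements a⁻¹b and a⁻²ba. -/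
namespace Statement11Aux

open Subgroup
open scoped commutatorElement

abbrev a : TrefoilGroup := PresentedGroup.of true
abbrev b : TrefoilGroup := PresentedGroup.of false

/-- The two claimed generators. -/
def S : Set TrefoilGroup := {a⁻¹ * b, a⁻¹ * a⁻¹ * b * a}

abbrev H : Subgroup TrefoilGroup := Subgroup.closure S

lemma hr : a * b * a * (b * a * b)⁻¹ = 1 := by
  exact (QuotientGroup.eq_one_iff _).mpr (Subgroup.subset_normalClosure rfl)

lemma hx : a⁻¹ * b ∈ H := subset_closure (Or.inl rfl)
lemma hy : a⁻¹ * a⁻¹ * b * a ∈ H := subset_closure (Or.inr rfl)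

/-- conjugate of x by a -/
lemma conj_a_x : a * (a⁻¹ * b) * a⁻¹ = (a⁻¹ * a⁻¹ * b * a)⁻¹ * (a⁻¹ * b) := by
  have key : a * (a⁻¹ * b) * a⁻¹ * ((a⁻¹ * a⁻¹ * b * a)⁻¹ * (a⁻¹ * b))⁻¹
      = (b * a)⁻¹ * (a * b * a * (b * a * b)⁻¹)⁻¹ * (b * a) := by group
  rw [hr] at key
  have key2 : (b * a)⁻¹ * ((1 : TrefoilGroup))⁻¹ * (b * a) = 1 := by group
  rw [key2] at key
  exact mul_inv_eq_one.mp key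

/-- conjugate of y by a -/
lemma conj_a_y : a * (a⁻¹ * a⁻¹ * b * a) * a⁻¹ = a⁻¹ * b := by group

/-- conjugate of x by a⁻¹ -/
lemma conj_ainv_x : a⁻¹ * (a⁻¹ * b) * a = a⁻¹ * a⁻¹ * b * a := by group

/-- conjugate of y by a⁻¹ -/
lemma conj_ainv_y :
    a⁻¹ * (a⁻¹ * a⁻¹ * b * a) * a = (a⁻¹ * a⁻¹ * b * a) * (a⁻¹ * b)⁻¹ := by
  have key : a⁻¹ * (a⁻¹ * a⁻¹ * b * a) * a * ((a⁻¹ * a⁻¹ * b * a) * (a⁻¹ * b)⁻¹)⁻¹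
      = (a ^ 3)⁻¹ * (a * b * a * (b * a * b)⁻¹)⁻¹ * a ^ 3 := by group
  rw [hr] at key
  have key2 : ((a : TrefoilGroup) ^ 3)⁻¹ * ((1 : TrefoilGroup))⁻¹ * (a : TrefoilGroup) ^ 3 = 1 := by group
  rw [key2] at key
  exact mul_inv_eq_one.mp key

lemma conj_mem (g : TrefoilGroup) (hg : ∀ s ∈ S, g * s * g⁻¹ ∈ H) :
    ∀ h ∈ H, g * h * g⁻¹ ∈ H := by
  intro h hh
  induction hh using Subgroup.closure_induction with
  | mem s hs => exact hg s hs
  | one => simpa using one_mem H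
  | mul u v _ _ hu hv =>
      have : g * (u * v) * g⁻¹ = (g * u * g⁻¹) * (g * v * g⁻¹) := by group
      rw [this]; exact mul_mem hu hv
  | inv u _ hu =>
      have : g * u⁻¹ * g⁻¹ = (g * u * g⁻¹)⁻¹ := by group
      rw [this]; exact inv_mem hu

lemma a_mem_normalizer : a ∈ Subgroup.normalizer (H : Set TrefoilGroup) := by
  have K1 : ∀ h ∈ H, a * h * a⁻¹ ∈ H := by
    refine conj_mem a ?_
    rintro s (rfl | rfl)
    · rw [conj_a_x]; exact mul_mem (inv_mem hy) hx
    · rw [conj_a_y]; exact hx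
  have K2 : ∀ h ∈ H, a⁻¹ * h * a ∈ H := by
    have := conj_mem a⁻¹ ?_
    · simpa using this
    · rintro s (rfl | rfl)
      · simp only [inv_inv]
        rw [conj_ainv_x]; exact hy
      · simp only [inv_inv]
        rw [conj_ainv_y]; exact mul_mem hy (inv_mem hx)
  refine Subgroup.mem_normalizer_iff.mpr fun h => ⟨fun hh => K1 h hh, fun hh => ?_⟩
  have := K2 _ hh
  have e : a⁻¹ * (a * h * a⁻¹) * a = h := by group
  rwa [e] at this

lemma b_mem_normalizer : b ∈ Subgroup.normalizer (H : Set TrefoilGroup) := by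
  have e : b = a * (a⁻¹ * b) := by group
  rw [e]
  exact mul_mem a_mem_normalizer (Subgroup.le_normalizer hx)

lemma H_normal : H.Normal := by
  rw [← Subgroup.normalizer_eq_top_iff, eq_top_iff,
    ← PresentedGroup.closure_range_of trefoilRels, Subgroup.closure_le]
  rintro _ ⟨(_ | _), rfl⟩
  · exact b_mem_normalizer
  · exact a_mem_normalizer

lemma comm_le : commutator TrefoilGroup ≤ H := by
  haveI := H_normal
  set q : TrefoilGroup →* TrefoilGroup ⧸ H := QuotientGroup.mk' H with hq
  have hqa : ∀ g : TrefoilGroup, q g ∈ Subgroup.closure {q a} := by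
    have : ∀ g : TrefoilGroup, g ∈ Subgroup.comap q (Subgroup.closure {q a}) := by
      refine PresentedGroup.generated_by _ _ ?_
      rintro (_ | _)
      · -- of false = b ; q b = q a since a⁻¹ b ∈ H
        have h1 : q (a⁻¹ * b) = 1 := (QuotientGroup.eq_one_iff _).mpr hx
        have h2 : q b = q a := by
          have := h1
          rw [map_mul, map_inv] at this
          exact (inv_mul_eq_one.mp this).symm ▸ by
            rw [← inv_mul_eq_one.mp this]
        rw [Subgroup.mem_comap]
        show q b ∈ _
        rw [h2]
        exact Subgroup.subset_closure rfl
      · rw [Subgroup.mem_comap]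
        exact Subgroup.subset_closure rfl
    intro g
    simpa [Subgroup.mem_comap] using this g
  have hcomm : ∀ c d : TrefoilGroup ⧸ H, c * d = d * c := by
    intro c d
    obtain ⟨g, rfl⟩ := QuotientGroup.mk'_surjective H c
    obtain ⟨h, rfl⟩ := QuotientGroup.mk'_surjective H d
    obtain ⟨m, hm⟩ := Subgroup.mem_closure_singleton.mp (hqa g)
    obtain ⟨n, hn⟩ := Subgroup.mem_closure_singleton.mp (hqa h)
    show q g * q h = q h * q g
    rw [← hm, ← hn, ← zpow_add, ← zpow_add, add_comm]
  rw [_root_.commutator_def, Subgroup.commutator_le]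
  intro g1 _ g2 _
  rw [← QuotientGroup.eq_one_iff (N := H)]
  show q ⁅g1, g2⁆ = 1
  rw [commutatorElement_def, map_mul, map_mul, map_mul, map_inv, map_inv,
    hcomm (q g1) (q g2)]
  group

lemma x_mem_comm : a⁻¹ * b ∈ commutator TrefoilGroup := by
  have e : a⁻¹ * b
      = a⁻¹ * (a * b * a * (b * a * b)⁻¹)⁻¹ * a * (b * a * b⁻¹ * a⁻¹) := by group
  rw [e, hr]
  have e2 : a⁻¹ * ((1 : TrefoilGroup))⁻¹ * a * (b * a * b⁻¹ * a⁻¹) = ⁅b, a⁆ := by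
    rw [commutatorElement_def]; group
  rw [e2, _root_.commutator_def]
  exact Subgroup.commutator_mem_commutator (Subgroup.mem_top _) (Subgroup.mem_top _)

lemma y_mem_comm : a⁻¹ * a⁻¹ * b * a ∈ commutator TrefoilGroup := by
  haveI : (commutator TrefoilGroup).Normal := by
    rw [_root_.commutator_def]; infer_instance
  have e : a⁻¹ * a⁻¹ * b * a = a⁻¹ * (a⁻¹ * b) * (a⁻¹)⁻¹ := by group
  rw [e]
  exact this.conj_mem _ x_mem_comm a⁻¹

lemma le_comm : H ≤ commutator TrefoilGroup := by
  rw [Subgroup.closure_le]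
  rintro s (rfl | rfl)
  · exact x_mem_comm
  · exact y_mem_comm

end Statement11Aux

/-- The commutator subgroup of the trefoil knot group is generated by
the two elements `a⁻¹b` and `a⁻²ba`. -/
theorem statement11 :
    commutator TrefoilGroup =
      Subgroup.closure
        {(PresentedGroup.of true : TrefoilGroup)⁻¹ * PresentedGroup.of false,
         (PresentedGroup.of true : TrefoilGroup)⁻¹ * (PresentedGroup.of true)⁻¹ *
           PresentedGroup.of false * PresentedGroup.of true} := by
  exact le_antisymm Statement11Aux.comm_le Statement11Aux.le_comm
end
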